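/- Let Δ = diag(b_1, b_2, b_3) with distinct nonzero b_i, and let L be Δ-normal of type (T2) with parameters x, y, q ∈ ℂ∖{0}, q' ∈ ℂ. Then the image subspace P_{3,3}(L) ⊆ M_2(ℂ) has dimension 3 if q' = q/b_2, and dimension 4 otherwise. -/

import Mathlib

/-- `b_Δ(1) = 1/b₃ - 1/b₂`. -/
noncomputable def bD1 (b₁ b₂ b₃ : ℂ) : ℂ := 1 / b₃ - 1 / b₂
/-- `b_Δ(2) = 1/b₃ - 1/b₁`. -/
noncomputable def bD2 (b₁ b₂ b₃ : ℂ) : ℂ := 1 / b₃ - 1 / b₁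
/-- `b_Δ(3) = 1/b₂ - 1/b₁`. -/
noncomputable def bD3 (b₁ b₂ b₃ : ℂ) : ℂ := 1 / b₂ - 1 / b₁

/-- The five canonical generators of a type (T1) `Δ`-normal subspace,
`Δ = diag(b₁,b₂,b₃)`, with parameters `x, y`. -/
noncomputable def t1Basis (b₁ b₂ b₃ x y : ℂ) : Fin 5 → Matrix (Fin 3) (Fin 3) ℂ :=
  ![!![1, 0, 0; x, 0, 0; y, 0, 0],
    !![1, 1, 0; bD3 b₁ b₂ b₃ * x, x, 0; bD2 b₁ b₂ b₃ * y, y, 0],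
    !![0, 0, 1; 0, 0, 0; 0, 0, 0],
    !![0, 0, 0; bD3 b₁ b₂ b₃ / b₂, bD3 b₁ b₂ b₃, 1; 0, 0, 0],
    !![0, 0, 0; 0, 0, 0; bD2 b₁ b₂ b₃ / b₃, bD2 b₁ b₂ b₃, 1]]

/-- The type (T1) `Δ`-normal subspace with parameters `x, y`. -/
noncomputable def t1Normal (b₁ b₂ b₃ x y : ℂ) : Submodule ℂ (Matrix (Fin 3) (Fin 3) ℂ) :=
  Submodule.span ℂ (Set.range (t1Basis b₁ b₂ b₃ x y))

/-- The five canonical generators of a type (T2) `Δ`-normal subspace,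
`Δ = diag(b₁,b₂,b₃)`, with parameters `x, y, q, q'`. -/
noncomputable def t2Basis (b₁ b₂ b₃ x y q q' : ℂ) : Fin 5 → Matrix (Fin 3) (Fin 3) ℂ :=
  ![!![1, 0, 0; x, 0, 0; y, 0, 0],
    !![1, 1, 0; bD3 b₁ b₂ b₃ * x, x, 0; bD2 b₁ b₂ b₃ * y, y, 0],
    !![0, 0, 1; q', q, 0; q' * y / x + bD1 b₁ b₂ b₃ * q * y / x, q * y / x, 0],
    !![0, 0, 0; bD3 b₁ b₂ b₃ / b₂ - q' / x, bD3 b₁ b₂ b₃ - q / x, 1; 0, 0, 0],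
    !![0, 0, 0; 0, 0, 0;
       bD2 b₁ b₂ b₃ / b₃ - bD1 b₁ b₂ b₃ * q / x - q' / x, bD2 b₁ b₂ b₃ - q / x, 1]]

/-- The type (T2) `Δ`-normal subspace with parameters `x, y, q, q'`. -/
noncomputable def t2Normal (b₁ b₂ b₃ x y q q' : ℂ) :
    Submodule ℂ (Matrix (Fin 3) (Fin 3) ℂ) :=
  Submodule.span ℂ (Set.range (t2Basis b₁ b₂ b₃ x y q q'))

/-- The five canonical generators of a strongly `Δ`-normal subspace,
`Δ = diag(b₁,b₂,b₃)`, with parameters `x, y, q`. -/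
noncomputable def strongBasis (b₁ b₂ b₃ x y q : ℂ) : Fin 5 → Matrix (Fin 3) (Fin 3) ℂ :=
  ![!![1, 0, 0; x, 0, 0; y, 0, 0],
    !![0, 1, 0; bD3 b₁ b₂ b₃ * x, x, 0; bD2 b₁ b₂ b₃ * y, y, 0],
    !![0, 0, 1; q / b₂, q, 0; -y / (b₁ * b₃), -y / b₁, 0],
    !![0, 0, 0; 1 / b₂ ^ 2, 1 / b₂, 1; 0, 0, 0],
    !![0, 0, 0; 0, 0, 0; 1 / b₃ ^ 2, 1 / b₃, 1]]

/-- The strongly `Δ`-normal subspace with parameters `x, y, q`. -/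
noncomputable def strongNormal (b₁ b₂ b₃ x y q : ℂ) :
    Submodule ℂ (Matrix (Fin 3) (Fin 3) ℂ) :=
  Submodule.span ℂ (Set.range (strongBasis b₁ b₂ b₃ x y q))

/-- Deleting row `k` and column `l`, as a linear map `M₃(ℂ) → M₂(ℂ)`. -/
def delL (k l : Fin 3) : Matrix (Fin 3) (Fin 3) ℂ →ₗ[ℂ] Matrix (Fin 2) (Fin 2) ℂ where
  toFun X := X.submatrix k.succAbove l.succAbove
  map_add' _ _ := rfl
  map_smul' _ _ := rfl

/-- The 3×3 lower Jordan cell. -/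
def J3 : Matrix (Fin 3) (Fin 3) ℂ := !![0, 0, 0; 1, 0, 0; 0, 1, 0]

lemma delL22 (m : Matrix (Fin 3) (Fin 3) ℂ) :
    delL 2 2 m = !![m 0 0, m 0 1; m 1 0, m 1 1] := by
  ext i j
  fin_cases i <;> fin_cases j <;> simp [delL, Matrix.submatrix, Fin.succAbove]

/-- For a type (T2) `Δ`-normal subspace `L`, the image `P_{3,3}(L)` has dimension 3
when `q' = q/b₂`, and dimension 4 otherwise. -/
theorem t2_p33_dim (b₁ b₂ b₃ : ℂ) (hb₁ : b₁ ≠ 0) (hb₂ : b₂ ≠ 0) (hb₃ : b₃ ≠ 0)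
    (h12 : b₁ ≠ b₂) (h13 : b₁ ≠ b₃) (h23 : b₂ ≠ b₃)
    (x y q : ℂ) (q' : ℂ) (hx : x ≠ 0) (hy : y ≠ 0) (hq : q ≠ 0) :
    (q' = q / b₂ →
      Module.finrank ℂ (Submodule.map (delL 2 2) (t2Normal b₁ b₂ b₃ x y q q')) = 3) ∧
    (q' ≠ q / b₂ →
      Module.finrank ℂ (Submodule.map (delL 2 2) (t2Normal b₁ b₂ b₃ x y q q')) = 4) := by
  have hbD3 : bD3 b₁ b₂ b₃ ≠ 0 := by
    simp only [bD3, sub_ne_zero]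
    intro h
    apply h12
    field_simp at h
    exact h
  have hS : Submodule.map (delL 2 2) (t2Normal b₁ b₂ b₃ x y q q')
      = Submodule.span ℂ (Set.range (fun i => delL 2 2 (t2Basis b₁ b₂ b₃ x y q q' i))) := by
    rw [t2Normal, Submodule.map_span, ← Set.range_comp]; rfl
  -- images of the generators
  have hg0 : delL 2 2 (t2Basis b₁ b₂ b₃ x y q q' 0) = !![1, 0; x, 0] := by
    rw [delL22]; simp [t2Basis]
  have hg1 : delL 2 2 (t2Basis b₁ b₂ b₃ x y q q' 1)
      = !![1, 1; bD3 b₁ b₂ b₃ * x, x] := by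
    rw [delL22]; simp [t2Basis]
  have hg2 : delL 2 2 (t2Basis b₁ b₂ b₃ x y q q' 2) = !![0, 0; q', q] := by
    rw [delL22]; simp [t2Basis]
  have hg3 : delL 2 2 (t2Basis b₁ b₂ b₃ x y q q' 3)
      = !![0, 0; bD3 b₁ b₂ b₃ / b₂ - q' / x, bD3 b₁ b₂ b₃ - q / x] := by
    rw [delL22]; simp [t2Basis]
  have hg4 : delL 2 2 (t2Basis b₁ b₂ b₃ x y q q' 4) = 0 := by
    rw [delL22]; simp [t2Basis]
    ext i j; fin_cases i <;> fin_cases j <;> simp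
  constructor
  · -- q' = q / b₂
    intro hq'
    set f : Fin 3 → Matrix (Fin 2) (Fin 2) ℂ :=
      ![!![1, 0; x, 0], !![1, 1; bD3 b₁ b₂ b₃ * x, x], !![0, 0; 1 / b₂, 1]] with hf
    have hspan : Submodule.map (delL 2 2) (t2Normal b₁ b₂ b₃ x y q q')
        = Submodule.span ℂ (Set.range f) := by
      rw [hS]
      apply le_antisymm <;> rw [Submodule.span_le, Set.range_subset_iff] <;> intro i
      · fin_cases i
        · show delL 2 2 (t2Basis b₁ b₂ b₃ x y q q' 0) ∈ Submodule.span ℂ (Set.range f)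
          rw [hg0]; exact Submodule.subset_span ⟨0, rfl⟩
        · show delL 2 2 (t2Basis b₁ b₂ b₃ x y q q' 1) ∈ Submodule.span ℂ (Set.range f)
          rw [hg1]; exact Submodule.subset_span ⟨1, rfl⟩
        · show delL 2 2 (t2Basis b₁ b₂ b₃ x y q q' 2) ∈ Submodule.span ℂ (Set.range f)
          rw [hg2]
          have : (!![0, 0; q', q] : Matrix (Fin 2) (Fin 2) ℂ) = q • f 2 := by
            simp [hf, hq']
            ring
          rw [this]
          exact Submodule.smul_mem _ _ (Submodule.subset_span ⟨2, rfl⟩)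
        · show delL 2 2 (t2Basis b₁ b₂ b₃ x y q q' 3) ∈ Submodule.span ℂ (Set.range f)
          rw [hg3]
          have : (!![0, 0; bD3 b₁ b₂ b₃ / b₂ - q' / x, bD3 b₁ b₂ b₃ - q / x]
              : Matrix (Fin 2) (Fin 2) ℂ) = (bD3 b₁ b₂ b₃ - q / x) • f 2 := by
            simp [hf, hq']
            ring
          rw [this]
          exact Submodule.smul_mem _ _ (Submodule.subset_span ⟨2, rfl⟩)
        · show delL 2 2 (t2Basis b₁ b₂ b₃ x y q q' 4) ∈ Submodule.span ℂ (Set.range f)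
          rw [hg4]; exact Submodule.zero_mem _
      · fin_cases i
        · show f 0 ∈ Submodule.span ℂ (Set.range (fun i => delL 2 2 (t2Basis b₁ b₂ b₃ x y q q' i)))
          rw [show f 0 = delL 2 2 (t2Basis b₁ b₂ b₃ x y q q' 0) from hg0.symm]
          exact Submodule.subset_span ⟨0, rfl⟩
        · show f 1 ∈ Submodule.span ℂ (Set.range (fun i => delL 2 2 (t2Basis b₁ b₂ b₃ x y q q' i)))
          rw [show f 1 = delL 2 2 (t2Basis b₁ b₂ b₃ x y q q' 1) from hg1.symm]
          exact Submodule.subset_span ⟨1, rfl⟩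
        · show f 2 ∈ Submodule.span ℂ (Set.range (fun i => delL 2 2 (t2Basis b₁ b₂ b₃ x y q q' i)))
          have : f 2 = q⁻¹ • delL 2 2 (t2Basis b₁ b₂ b₃ x y q q' 2) := by
            rw [hg2]; simp [hf, hq']
            constructor <;> field_simp
          rw [this]
          exact Submodule.smul_mem _ _ (Submodule.subset_span ⟨2, rfl⟩)
    rw [hspan]
    have hli : LinearIndependent ℂ f := by
      rw [Fintype.linearIndependent_iff]
      intro c hc
      rw [Fin.sum_univ_three] at hc
      rw [← Matrix.ext_iff] at hc
      have h01 := hc 0 1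
      have h00 := hc 0 0
      have h11 := hc 1 1
      simp [hf, Matrix.add_apply, Matrix.smul_apply] at h01 h00 h11
      have hc1 : c 1 = 0 := h01
      have hc0 : c 0 = 0 := by rw [hc1] at h00; simpa using h00
      have hc2 : c 2 = 0 := by rw [hc1] at h11; simpa using h11
      intro i; fin_cases i <;> assumption
    rw [finrank_span_eq_card hli]
    simp
  · -- q' ≠ q / b₂
    intro hq'
    have hd : q' - q / b₂ ≠ 0 := sub_ne_zero.mpr hq'
    set f : Fin 4 → Matrix (Fin 2) (Fin 2) ℂ :=
      ![!![1, 0; x, 0], !![1, 1; bD3 b₁ b₂ b₃ * x, x], !![0, 0; q', q],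
        !![0, 0; bD3 b₁ b₂ b₃ / b₂ - q' / x, bD3 b₁ b₂ b₃ - q / x]] with hf
    have hli : LinearIndependent ℂ f := by
      rw [Fintype.linearIndependent_iff]
      intro c hc
      rw [Fin.sum_univ_four] at hc
      rw [← Matrix.ext_iff] at hc
      have h00 := hc 0 0
      have h01 := hc 0 1
      have h10 := hc 1 0
      have h11 := hc 1 1
      simp [hf, Matrix.add_apply, Matrix.smul_apply] at h00 h01 h10 h11
      have hc1 : c 1 = 0 := h01
      have hc0 : c 0 = 0 := by rw [hc1] at h00; simpa using h00
      simp only [hc0, hc1, zero_mul, mul_zero, zero_add, add_zero] at h10 h11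
      have key : c 3 * (bD3 b₁ b₂ b₃ * (q' - q / b₂)) = 0 := by
        have e1 : c 2 * q' + c 3 * (bD3 b₁ b₂ b₃ / b₂ - q' / x) = 0 := h10
        have e2 : c 2 * q + c 3 * (bD3 b₁ b₂ b₃ - q / x) = 0 := h11
        linear_combination q' * e2 - q * e1
      have hc3 : c 3 = 0 := by
        rcases mul_eq_zero.mp key with h | h
        · exact h
        · exact absurd h (mul_ne_zero hbD3 hd)
      have hc2 : c 2 = 0 := by
        rw [hc3] at h11; simp at h11
        rcases h11 with h | h
        · exact h
        · exact absurd h hq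
      intro i; fin_cases i <;> assumption
    have hle : Submodule.span ℂ (Set.range f)
        ≤ Submodule.map (delL 2 2) (t2Normal b₁ b₂ b₃ x y q q') := by
      rw [hS, Submodule.span_le, Set.range_subset_iff]
      intro i
      fin_cases i
      · show f 0 ∈ Submodule.span ℂ (Set.range (fun i => delL 2 2 (t2Basis b₁ b₂ b₃ x y q q' i)))
        rw [show f 0 = delL 2 2 (t2Basis b₁ b₂ b₃ x y q q' 0) from by simp [hf, hg0]]
        exact Submodule.subset_span ⟨0, rfl⟩
      · show f 1 ∈ Submodule.span ℂ (Set.range (fun i => delL 2 2 (t2Basis b₁ b₂ b₃ x y q q' i)))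
        rw [show f 1 = delL 2 2 (t2Basis b₁ b₂ b₃ x y q q' 1) from by simp [hf, hg1]]
        exact Submodule.subset_span ⟨1, rfl⟩
      · show f 2 ∈ Submodule.span ℂ (Set.range (fun i => delL 2 2 (t2Basis b₁ b₂ b₃ x y q q' i)))
        rw [show f 2 = delL 2 2 (t2Basis b₁ b₂ b₃ x y q q' 2) from by simp [hf, hg2]]
        exact Submodule.subset_span ⟨2, rfl⟩
      · show f 3 ∈ Submodule.span ℂ (Set.range (fun i => delL 2 2 (t2Basis b₁ b₂ b₃ x y q q' i)))
        rw [show f 3 = delL 2 2 (t2Basis b₁ b₂ b₃ x y q q' 3) from by simp [hf, hg3]]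
        exact Submodule.subset_span ⟨3, rfl⟩
    have h4le : 4 ≤ Module.finrank ℂ
        (Submodule.map (delL 2 2) (t2Normal b₁ b₂ b₃ x y q q')) := by
      have := Submodule.finrank_mono hle
      rw [finrank_span_eq_card hli] at this
      simpa using this
    have hle4 : Module.finrank ℂ
        (Submodule.map (delL 2 2) (t2Normal b₁ b₂ b₃ x y q q')) ≤ 4 := by
      have := Submodule.finrank_le (Submodule.map (delL 2 2) (t2Normal b₁ b₂ b₃ x y q q'))
      simpa [Module.finrank_matrix] using this
    omega
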